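/- arXiv:2402.02143 — 4 statements merged into one kernel-verified Lean document; each statement's English description precedes it below -/
import Mathlib

section
/- Let c, p ∈ ℕ with c, p ≥ 2 and p prime. For any finite nilpotent group G₀ of nilpotency class at most c and exponent dividing p, there exists a finite group G₁ in the same class (nilpotent of class at most c, exponent dividing p) with G₀ ≤ G₁ such that for every finite group C nilpotent of class at most c and exponent dividing p containing G₁, and every i ≤ c, one has Γ_i(G₁) ∩ G₀ = Γ_i(C) ∩ G₀. -/
/-- Lemma 2.8: for any finite group `G₀` nilpotent of class at most `c` and of exponent
dividing `p`, there is a finite group `G₁` in the same class containing `G₀` such that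
for every finite group `C` in the class containing `G₁` and every `i ≤ c`,
`Γᵢ(G₁) ∩ G₀ = Γᵢ(C) ∩ G₀` (intersections computed via the embeddings). -/
theorem exists_good_extension_nilpotent (c p : ℕ) (hc : 2 ≤ c) (hp2 : 2 ≤ p)
    (hp : p.Prime) (G₀ : Type) [Group G₀] [Finite G₀]
    (hG₀nil : (⊤ : Subgroup G₀).lowerCentralSeries c = ⊥) (hG₀exp : ∀ g : G₀, g ^ p = 1) :
    ∃ (G₁ : Type) (_ : Group G₁) (_ : Finite G₁),
      (⊤ : Subgroup G₁).lowerCentralSeries c = ⊥ ∧ (∀ g : G₁, g ^ p = 1) ∧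
      ∃ f : G₀ →* G₁, Function.Injective f ∧
        ∀ (C : Type) (_ : Group C) (_ : Finite C),
          (⊤ : Subgroup C).lowerCentralSeries c = ⊥ → (∀ g : C, g ^ p = 1) →
          ∀ (ι : G₁ →* C), Function.Injective ι →
            ∀ i ≤ c, ((⊤ : Subgroup G₁).lowerCentralSeries i).comap f =
              ((⊤ : Subgroup C).lowerCentralSeries i).comap (ι.comp f) := by
  classical
  set T : Set (Fin (c + 1) → Subgroup G₀) :=
    {t | ∃ (G₁ : Type) (_ : Group G₁) (_ : Finite G₁),
      (⊤ : Subgroup G₁).lowerCentralSeries c = ⊥ ∧ (∀ g : G₁, g ^ p = 1) ∧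
      ∃ f : G₀ →* G₁, Function.Injective f ∧
        t = fun i : Fin (c + 1) => ((⊤ : Subgroup G₁).lowerCentralSeries (i : ℕ)).comap f} with hT
  have hne : T.Nonempty :=
    ⟨_, G₀, ‹_›, ‹_›, hG₀nil, hG₀exp, MonoidHom.id G₀, Function.injective_id, rfl⟩
  obtain ⟨t, htT, hmax⟩ := Set.Finite.exists_maximalFor id T (Set.toFinite T) hne
  obtain ⟨G₁, _, _, h1, h2, f, hf, rfl⟩ := htT
  refine ⟨G₁, ‹_›, ‹_›, h1, h2, f, hf, ?_⟩
  intro C _ _ hC1 hC2 ι hι i hi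
  have key : ∀ j : ℕ, ((⊤ : Subgroup G₁).lowerCentralSeries j).comap f ≤
      ((⊤ : Subgroup C).lowerCentralSeries j).comap (ι.comp f) := by
    intro j x hx
    exact lowerCentralSeries.map ι j ⟨f x, hx, rfl⟩
  have htC : (fun i : Fin (c + 1) => ((⊤ : Subgroup C).lowerCentralSeries (i : ℕ)).comap (ι.comp f)) ∈ T :=
    ⟨C, ‹_›, ‹_›, hC1, hC2, ι.comp f, hι.comp hf, rfl⟩
  have hle : (fun i : Fin (c + 1) => ((⊤ : Subgroup G₁).lowerCentralSeries (i : ℕ)).comap f) ≤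
      fun i : Fin (c + 1) => ((⊤ : Subgroup C).lowerCentralSeries (i : ℕ)).comap (ι.comp f) :=
    fun i => key i
  have heq := le_antisymm hle (hmax htC hle)
  have := congrFun heq ⟨i, Nat.lt_succ_of_le hi⟩
  simpa using this
end

section
/- Let N, N' ⊆ ℕ be recursively inseparable computably enumerable sets (there is no computable set W with N ⊆ W and N' ∩ W = ∅). Let A be an abelian group generated by elements a₁, a₂, … subject to relations a₁ = a_i for i ∈ N and a₂ = a_j for j ∈ N', with a₁ ≠ a₂ in A. Then the set W = {i ∈ ℕ : a_i = a₁ in A} is not computable. -/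
/-- Miller's construction: if `N, N'` are recursively inseparable c.e. sets and `A` is
an abelian group generated by elements `a i` with `a i = a 1` for `i ∈ N`,
`a j = a 2` for `j ∈ N'` and `a 1 ≠ a 2`, then `W = {i : a i = a 1}` is not
computable. -/
theorem miller_set_not_computable (N N' : Set ℕ)
    (hN : REPred (· ∈ N)) (hN' : REPred (· ∈ N'))
    (hinsep : ¬ ∃ W : Set ℕ, ComputablePred (· ∈ W) ∧ N ⊆ W ∧ N' ∩ W = ∅)
    (A : Type) [AddCommGroup A] (a : ℕ → A)
    (hgen : AddSubgroup.closure (Set.range a) = ⊤)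
    (h1 : ∀ i ∈ N, a i = a 1) (h2 : ∀ j ∈ N', a j = a 2) (h12 : a 1 ≠ a 2) :
    ¬ ComputablePred (fun i : ℕ => a i = a 1) := by
  intro hW
  exact hinsep ⟨{i | a i = a 1}, hW, fun i hi => h1 i hi,
    Set.eq_empty_iff_forall_notMem.2 fun j ⟨hj, hjW⟩ =>
      h12 ((h2 j hj).symm.trans hjW).symm⟩
end

section
/- Every countable left-orderable group G acts faithfully on (ℚ, <) by order-preserving bijections. -/
/-- Every countable left-orderable group acts faithfully on `(ℚ, <)` by
order-preserving bijections. -/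
theorem countable_left_orderable_acts_on_rat (G : Type) [Group G] [Countable G]
    (hlo : ∃ r : LinearOrder G, ∀ f g h : G, r.lt g h → r.lt (f * g) (f * h)) :
    ∃ φ : G →* Equiv.Perm ℚ, Function.Injective φ ∧ ∀ g : G, StrictMono (φ g) := by
  obtain ⟨r, hr⟩ := hlo
  letI : LinearOrder G := r
  letI : Countable (G ×ₗ ℚ) := inferInstanceAs (Countable (G × ℚ))
  haveI : Nonempty (G ×ₗ ℚ) := ⟨toLex (1, 0)⟩
  haveI : DenselyOrdered (G ×ₗ ℚ) := by
    constructor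
    intro x y h
    rcases (Prod.Lex.toLex_lt_toLex (x := ofLex x) (y := ofLex y)).mp h with h1 | ⟨h1, h2⟩
    · refine ⟨toLex ((ofLex x).1, (ofLex x).2 + 1), ?_, ?_⟩
      · exact (Prod.Lex.toLex_lt_toLex (x := ofLex x) (y := ((ofLex x).1, (ofLex x).2 + 1))).mpr
          (Or.inr ⟨rfl, lt_add_one _⟩)
      · exact (Prod.Lex.toLex_lt_toLex (x := ((ofLex x).1, (ofLex x).2 + 1)) (y := ofLex y)).mpr (Or.inl h1)
    · obtain ⟨m, hm1, hm2⟩ := exists_between h2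
      refine ⟨toLex ((ofLex x).1, m), ?_, ?_⟩
      · exact (Prod.Lex.toLex_lt_toLex (x := ofLex x) (y := ((ofLex x).1, m))).mpr (Or.inr ⟨rfl, hm1⟩)
      · exact (Prod.Lex.toLex_lt_toLex (x := ((ofLex x).1, m)) (y := ofLex y)).mpr (Or.inr ⟨h1, hm2⟩)
  haveI : NoMinOrder (G ×ₗ ℚ) := ⟨fun x => ⟨toLex ((ofLex x).1, (ofLex x).2 - 1),
    (Prod.Lex.toLex_lt_toLex (x := ((ofLex x).1, (ofLex x).2 - 1)) (y := ofLex x)).mpr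
      (Or.inr ⟨rfl, sub_lt_self _ one_pos⟩)⟩⟩
  haveI : NoMaxOrder (G ×ₗ ℚ) := ⟨fun x => ⟨toLex ((ofLex x).1, (ofLex x).2 + 1),
    (Prod.Lex.toLex_lt_toLex (x := ofLex x) (y := ((ofLex x).1, (ofLex x).2 + 1))).mpr
      (Or.inr ⟨rfl, lt_add_one _⟩)⟩⟩
  obtain ⟨e⟩ := Order.iso_of_countable_dense (G ×ₗ ℚ) ℚ
  -- the permutation of `G ×ₗ ℚ` given by left multiplication on the first factor
  let p : G → Equiv.Perm (G ×ₗ ℚ) := fun g =>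
    (ofLex : (G ×ₗ ℚ) ≃ (G × ℚ)).trans
      (((Equiv.mulLeft g).prodCongr (Equiv.refl ℚ)).trans
        (toLex : (G × ℚ) ≃ (G ×ₗ ℚ)))
  have hp : ∀ g x, p g x = toLex (g * (ofLex x).1, (ofLex x).2) := fun g x => rfl
  have hpmono : ∀ g, StrictMono (p g) := by
    intro g x y hxy
    rcases (Prod.Lex.toLex_lt_toLex (x := ofLex x) (y := ofLex y)).mp hxy with h1 | ⟨h1, h2⟩
    · exact (Prod.Lex.toLex_lt_toLex (x := (g * (ofLex x).1, (ofLex x).2))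
        (y := (g * (ofLex y).1, (ofLex y).2))).mpr (Or.inl (hr g _ _ h1))
    · exact (Prod.Lex.toLex_lt_toLex (x := (g * (ofLex x).1, (ofLex x).2))
        (y := (g * (ofLex y).1, (ofLex y).2))).mpr (Or.inr ⟨by rw [h1], h2⟩)
  let φ : G →* Equiv.Perm ℚ := {
    toFun := fun g => (e.symm.toEquiv.trans ((p g).trans e.toEquiv))
    map_one' := by
      ext q
      simp [hp]
    map_mul' := by
      intro g h
      ext q
      simp [hp, mul_assoc] }
  have key : ∀ g : G, φ g (e (toLex (1, 0))) = e (toLex (g, 0)) := by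
    intro g
    simp [φ, hp]
  refine ⟨φ, ?_, ?_⟩
  · intro g g' hgg'
    have h1 : e (toLex (g, (0:ℚ))) = e (toLex (g', 0)) := by
      rw [← key g, ← key g', hgg']
    have h2 := e.injective h1
    exact congrArg (fun z => (ofLex z).1) h2
  · intro g q q' hq
    exact e.strictMono (hpmono g (e.symm.strictMono hq))
end

section
/- In a Polish space X with a countable basis of clopen sets, if for every Borel set B in a countable family 𝓑 and every nonempty basic clopen A there is a basic clopen A' ⊆ A that decides B (i.e., A'∖B is meagre in A' or A'∩B is meagre in A'), then the set of 𝓑-generic points (points x such that every B ∈ 𝓑 is decided by some basic clopen neighborhood of x) is comeagre in X. -/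
/-- A clopen set `A` *decides* a set `B` if `A \ B` is meagre in `A` or `A ∩ B` is
meagre in `A` (meagreness taken in the subspace `A`). -/
def Decides {X : Type} [TopologicalSpace X] (A B : Set X) : Prop :=
  IsMeagre ((Subtype.val ⁻¹' (A \ B)) : Set A) ∨
    IsMeagre ((Subtype.val ⁻¹' (A ∩ B)) : Set A)

lemma decides_of_meagre {X : Type} [TopologicalSpace X] {A B : Set X} (hA : IsOpen A)
    (h : IsMeagre (A \ B) ∨ IsMeagre (A ∩ B)) : Decides A B := by
  have hpre : ∀ s : Set X, IsMeagre s → IsMeagre ((Subtype.val ⁻¹' s) : Set A) := fun s hs =>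
    hs.preimage_of_isOpenMap continuous_subtype_val hA.isOpenMap_subtype_val
  exact h.imp (hpre _) (hpre _)

/-- In a Polish space with a countable basis of clopen sets `𝒜`, if for every Borel
set `B` in a countable family `𝓑` the basic clopen sets deciding `B` are dense in the
basis, then the set of `𝓑`-generic points is comeagre. -/
theorem generic_points_comeagre (X : Type) [TopologicalSpace X] [PolishSpace X]
    [MeasurableSpace X] [BorelSpace X]
    (𝒜 : Set (Set X)) (h𝒜count : 𝒜.Countable) (h𝒜clopen : ∀ A ∈ 𝒜, IsClopen A)
    (h𝒜basis : TopologicalSpace.IsTopologicalBasis 𝒜)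
    (𝓑 : Set (Set X)) (h𝓑count : 𝓑.Countable) (h𝓑borel : ∀ B ∈ 𝓑, MeasurableSet B)
    (hdense : ∀ B ∈ 𝓑, ∀ A ∈ 𝒜, A.Nonempty → ∃ A' ∈ 𝒜, A' ⊆ A ∧ Decides A' B) :
    {x : X | ∀ B ∈ 𝓑, ∃ A ∈ 𝒜, x ∈ A ∧ Decides A B} ∈ residual X := by
  have : {x : X | ∀ B ∈ 𝓑, ∃ A ∈ 𝒜, x ∈ A ∧ Decides A B}
      = ⋂ B ∈ 𝓑, {x : X | ∃ A ∈ 𝒜, x ∈ A ∧ Decides A B} := by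
    ext x; simp
  rw [this]
  refine (countable_bInter_mem h𝓑count).2 ?_
  intro B hB
  -- B and Bᶜ agree with open sets modulo meagre sets
  obtain ⟨U, hUopen, hUeq⟩ := (h𝓑borel B hB).residualEq_isOpen
  obtain ⟨V, hVopen, hVeq⟩ := (h𝓑borel B hB).compl.residualEq_isOpen
  have hUB : IsMeagre (U \ B) := by
    rw [IsMeagre]
    filter_upwards [hUeq] with x hx
    simp only [Set.mem_compl_iff, Set.mem_diff, not_and, not_not]
    intro hxU
    exact hx.mpr hxU
  have hVB : IsMeagre (V ∩ B) := by
    rw [IsMeagre]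
    filter_upwards [hVeq] with x hx
    simp only [Set.mem_compl_iff, Set.mem_inter_iff, not_and]
    intro hxV
    have : x ∈ Bᶜ := hx.mpr hxV
    exact this
  -- U ∪ V is comeagre
  have hUV : (U ∪ V) ∈ residual X := by
    have hcompl : IsMeagre (U ∪ V)ᶜ := by
      have hsub : (U ∪ V)ᶜ ⊆ (U \ B) ∪ ((V ∩ B) ∪ ((B \ U) ∪ (Bᶜ \ V))) := by
        intro x hx
        simp only [Set.mem_compl_iff, Set.mem_union, not_or] at hx
        by_cases hxB : x ∈ B
        · exact Or.inr (Or.inr (Or.inl ⟨hxB, hx.1⟩))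
        · exact Or.inr (Or.inr (Or.inr ⟨hxB, hx.2⟩))
      refine IsMeagre.mono hsub ?_
      have hBU : IsMeagre (B \ U) := by
        rw [IsMeagre]
        filter_upwards [hUeq] with x hx
        simp only [Set.mem_compl_iff, Set.mem_diff, not_and, not_not]
        intro hxB
        exact hx.mp hxB
      have hBV : IsMeagre (Bᶜ \ V) := by
        rw [IsMeagre]
        filter_upwards [hVeq] with x hx
        simp only [Set.mem_compl_iff, Set.mem_diff, not_and, not_not]
        intro hxB
        exact hx.mp hxB
      rw [IsMeagre, Set.compl_union, Set.compl_union, Set.compl_union]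
      exact Filter.inter_mem hUB (Filter.inter_mem hVB (Filter.inter_mem hBU hBV))
    rw [IsMeagre, compl_compl] at hcompl
    exact hcompl
  refine Filter.mem_of_superset hUV ?_
  rintro x (hx | hx)
  · obtain ⟨A, hA𝒜, hxA, hAU⟩ := h𝒜basis.exists_subset_of_mem_open hx hUopen
    refine ⟨A, hA𝒜, hxA, decides_of_meagre (h𝒜clopen A hA𝒜).isOpen
      (Or.inl (hUB.mono (Set.diff_subset_diff_left hAU)))⟩
  · obtain ⟨A, hA𝒜, hxA, hAV⟩ := h𝒜basis.exists_subset_of_mem_open hx hVopen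
    refine ⟨A, hA𝒜, hxA, decides_of_meagre (h𝒜clopen A hA𝒜).isOpen
      (Or.inr (hVB.mono (Set.inter_subset_inter_left _ hAV)))⟩
end
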